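/- Let v : [N, N+1] → (0,∞) be measurable with ∫_N^{N+1} (v(x) - log v(x) - 1) dx ≤ e₀ for some e₀ > 0. Then α₁ ≤ ∫_N^{N+1} v(x) dx ≤ α₂, where 0 < α₁ < α₂ are the two roots of y - log y - 1 = e₀. -/

import Mathlib

open Real MeasureTheory intervalIntegral

lemma fanti : StrictAntiOn (fun y : ℝ => y - Real.log y - 1) (Set.Ioc 0 1) := by
  apply strictAntiOn_of_deriv_neg (convex_Ioc 0 1)
  · exact ((continuousOn_id.sub (Real.continuousOn_log.mono (by
      intro x hx; exact ne_of_gt hx.1))).sub continuousOn_const)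
  · intro x hx
    rw [interior_Ioc] at hx
    have hx0 : x ≠ 0 := ne_of_gt hx.1
    have h : HasDerivAt (fun y : ℝ => y - Real.log y - 1) (1 - 1/x) x := by
      simpa using ((hasDerivAt_id x).sub (Real.hasDerivAt_log hx0)).sub_const 1
    rw [h.deriv]
    have : 1 < 1/x := by rw [lt_div_iff₀ hx.1]; linarith [hx.2]
    linarith

lemma fmono : StrictMonoOn (fun y : ℝ => y - Real.log y - 1) (Set.Ici 1) := by
  apply strictMonoOn_of_deriv_pos (convex_Ici 1)
  · exact ((continuousOn_id.sub (Real.continuousOn_log.mono (by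
      intro x hx; exact ne_of_gt (lt_of_lt_of_le one_pos hx)))).sub continuousOn_const)
  · intro x hx
    rw [interior_Ici] at hx
    have hx0 : (0:ℝ) < x := lt_trans one_pos hx
    have h : HasDerivAt (fun y : ℝ => y - Real.log y - 1) (1 - 1/x) x := by
      simpa using ((hasDerivAt_id x).sub (Real.hasDerivAt_log (ne_of_gt hx0))).sub_const 1
    rw [h.deriv]
    have : 1/x < 1 := by rw [div_lt_one hx0]; exact hx
    linarith

/-- If `∫_N^{N+1} (v - log v - 1) ≤ e₀` for a positive function `v`, then
`α₁ ≤ ∫_N^{N+1} v ≤ α₂` where `α₁ < α₂` are the two roots of `y - log y - 1 = e₀`. -/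
theorem stmt3 (N e₀ α₁ α₂ : ℝ) (v : ℝ → ℝ)
    (he₀ : 0 < e₀) (hα₁ : 0 < α₁) (hα : α₁ < α₂)
    (hroot₁ : α₁ - Real.log α₁ - 1 = e₀) (hroot₂ : α₂ - Real.log α₂ - 1 = e₀)
    (hα₁1 : α₁ < 1) (hα₂1 : 1 < α₂)
    (hv : Measurable v) (hvpos : ∀ x ∈ Set.Icc N (N + 1), 0 < v x)
    (hint : IntervalIntegrable v volume N (N + 1))
    (hint' : IntervalIntegrable (fun x => v x - Real.log (v x) - 1) volume N (N + 1))
    (hE : ∫ x in N..(N + 1), (v x - Real.log (v x) - 1) ≤ e₀) :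
    α₁ ≤ ∫ x in N..(N + 1), v x ∧ (∫ x in N..(N + 1), v x) ≤ α₂ := by
  set I := ∫ x in N..(N + 1), v x with hI
  have hle : N ≤ N + 1 := by linarith
  have hIpos : 0 < I := by
    apply intervalIntegral.intervalIntegral_pos_of_pos_on hint
    · intro x hx; exact hvpos x ⟨le_of_lt hx.1, le_of_lt hx.2⟩
    · linarith
  -- integrability of log ∘ v
  have hlogint : IntervalIntegrable (fun x => Real.log (v x)) volume N (N + 1) := by
    have h2 : (fun x => v x - (v x - Real.log (v x) - 1) - 1) = fun x => Real.log (v x) := by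
      funext x; ring
    have := (hint.sub hint').sub (_root_.intervalIntegrable_const (c := (1:ℝ)))
    rwa [h2] at this
  -- pointwise bound
  have hpt : ∀ x ∈ Set.Icc N (N + 1), Real.log (v x) ≤ Real.log I + (v x / I - 1) := by
    intro x hx
    have hvx := hvpos x hx
    have h1 : Real.log (v x / I) ≤ v x / I - 1 :=
      Real.log_le_sub_one_of_pos (div_pos hvx hIpos)
    rw [Real.log_div (ne_of_gt hvx) (ne_of_gt hIpos)] at h1
    linarith
  have hL : (∫ x in N..(N + 1), Real.log (v x)) ≤ Real.log I := by
    have hmono : (∫ x in N..(N + 1), Real.log (v x)) ≤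
        ∫ x in N..(N + 1), (Real.log I + (v x / I - 1)) := by
      apply intervalIntegral.integral_mono_on hle hlogint
      · exact (intervalIntegrable_const.add ((hint.div_const I).sub intervalIntegrable_const))
      · exact hpt
    have hcalc : (∫ x in N..(N + 1), (Real.log I + (v x / I - 1)))
        = Real.log I + (I / I - 1) := by
      rw [intervalIntegral.integral_add intervalIntegrable_const
        ((hint.div_const I).sub intervalIntegrable_const),
        intervalIntegral.integral_sub (hint.div_const I) intervalIntegrable_const,
        intervalIntegral.integral_div, intervalIntegral.integral_const]
      simp [← hI]
    rw [hcalc, div_self (ne_of_gt hIpos)] at hmono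
    simpa using hmono
  have hsplit : (∫ x in N..(N + 1), (v x - Real.log (v x) - 1))
      = I - (∫ x in N..(N + 1), Real.log (v x)) - 1 := by
    rw [intervalIntegral.integral_sub (hint.sub hlogint) intervalIntegrable_const,
      intervalIntegral.integral_sub hint hlogint, intervalIntegral.integral_const]
    simp [← hI]
  have hfI : I - Real.log I - 1 ≤ e₀ := by
    rw [hsplit] at hE; linarith
  constructor
  · by_contra h
    push_neg at h
    have : α₁ - Real.log α₁ - 1 < I - Real.log I - 1 :=
      fanti ⟨hIpos, by linarith⟩ ⟨hα₁, le_of_lt hα₁1⟩ h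
    rw [hroot₁] at this; linarith
  · by_contra h
    push_neg at h
    have : α₂ - Real.log α₂ - 1 < I - Real.log I - 1 :=
      fmono (le_of_lt hα₂1) (le_of_lt (lt_trans hα₂1 h)) h
    rw [hroot₂] at this; linarith
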